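/- Let B be a real n×n matrix with det B ≤ 0, let R be the unique symmetric positive semidefinite square root of Bᵀ B, and let λ_min denote the smallest eigenvalue of R. Then the maximum of trace(Qᵀ B) over Q ∈ SO(n) equals trace(R) − 2 λ_min, and Q ∈ SO(n) attains this maximum if and only if Q = U H J Hᵀ for some orthogonal matrix U with det U = −1 and U R = B, and some orthogonal matrix H such that Hᵀ R H is diagonal and the first column of H is an eigenvector of R for the eigenvalue λ_min, where J is the diagonal matrix diag(−1, 1, …, 1). -/

import Mathlib

open Matrix Finset
open scoped RealInnerProductSpace

variable {n : ℕ}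

private lemma s9_col_dot {W : Matrix (Fin n) (Fin n) ℝ} (hW : Wᵀ * W = 1) (i j : Fin n) :
    (fun k => W k i) ⬝ᵥ (fun k => W k j) = if i = j then 1 else 0 := by
  have := congrFun (congrFun hW i) j
  simpa [mul_apply, dotProduct, one_apply] using this

private lemma s9_col_sq {W : Matrix (Fin n) (Fin n) ℝ} (hW : Wᵀ * W = 1) (j : Fin n) :
    ∑ k, (W k j)^2 = 1 := by
  have := s9_col_dot hW j j
  simpa [dotProduct, sq] using this

private lemma s9_diag_le_one {W : Matrix (Fin n) (Fin n) ℝ} (hW : Wᵀ * W = 1) (j : Fin n) :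
    W j j ≤ 1 := by
  have h1 := s9_col_sq hW j
  nlinarith [Finset.single_le_sum (f := fun k => (W k j)^2) (fun k _ => sq_nonneg _)
    (Finset.mem_univ j)]

private lemma s9_col_eq_zero {W : Matrix (Fin n) (Fin n) ℝ} (hW : Wᵀ * W = 1) {i j : Fin n}
    (hjj : W j j = 1) (hij : i ≠ j) : W i j = 0 := by
  have h1 := s9_col_sq hW j
  have h2 : ∑ k ∈ univ.erase j, (W k j)^2 = 0 := by
    rw [← Finset.add_sum_erase _ _ (Finset.mem_univ j)] at h1
    rw [hjj] at h1; nlinarith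
  have := (Finset.sum_eq_zero_iff_of_nonneg (fun k _ => sq_nonneg (W k j))).1 h2 i
    (Finset.mem_erase.2 ⟨hij, Finset.mem_univ i⟩)
  exact pow_eq_zero_iff (two_ne_zero) |>.1 this

private lemma s9_trace_le {W : Matrix (Fin n) (Fin n) ℝ} (hW : Wᵀ * W = 1) :
    W.trace ≤ n := by
  have : W.trace = ∑ i, W i i := rfl
  rw [this]
  calc ∑ i, W i i ≤ ∑ _i : Fin n, (1:ℝ) := Finset.sum_le_sum fun i _ => s9_diag_le_one hW i
  _ = n := by simp

private lemma s9_eq_one_of_trace {W : Matrix (Fin n) (Fin n) ℝ} (hW : Wᵀ * W = 1)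
    (ht : W.trace = n) : W = 1 := by
  have hdiag : ∀ i, W i i = 1 := by
    intro i
    by_contra h
    have hlt : W i i < 1 := lt_of_le_of_ne (s9_diag_le_one hW i) h
    have : ∑ j, W j j < ∑ _j : Fin n, (1:ℝ) := by
      apply Finset.sum_lt_sum (fun j _ => s9_diag_le_one hW j) ⟨i, Finset.mem_univ i, hlt⟩
    rw [show ∑ j, W j j = W.trace from rfl, ht] at this
    simp at this
  ext i j
  by_cases h : i = j
  · subst h; simp [hdiag i]
  · rw [s9_col_eq_zero hW (hdiag j) h, one_apply_ne h]

variable {n : ℕ}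

private lemma s9_dot_pos {v : Fin n → ℝ} (hv : v ≠ 0) : 0 < v ⬝ᵥ v := by
  rcases lt_or_eq_of_le (Finset.sum_nonneg fun i _ => mul_self_nonneg (v i)) with h | h
  · exact h
  · exact absurd (dotProduct_self_eq_zero.1 h.symm) hv

/-- normalize an eigenvector -/
private lemma s9_normalize {R : Matrix (Fin n) (Fin n) ℝ} {v : Fin n → ℝ} {μ : ℝ}
    (hv : v ≠ 0) (h : R *ᵥ v = μ • v) :
    ∃ w : Fin n → ℝ, w ⬝ᵥ w = 1 ∧ R *ᵥ w = μ • w := by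
  have hp := s9_dot_pos hv
  refine ⟨(Real.sqrt (v ⬝ᵥ v))⁻¹ • v, ?_, ?_⟩
  · have : ((Real.sqrt (v ⬝ᵥ v))⁻¹ • v) ⬝ᵥ ((Real.sqrt (v ⬝ᵥ v))⁻¹ • v)
        = ((Real.sqrt (v ⬝ᵥ v))⁻¹)^2 * (v ⬝ᵥ v) := by
      simp [smul_dotProduct, dotProduct_smul, sq]; ring
    rw [this, inv_pow, Real.sq_sqrt hp.le]
    exact inv_mul_cancel₀ hp.ne'
  · rw [mulVec_smul, h, smul_comm]

private lemma s9_neg_one_eigvec {W : Matrix (Fin n) (Fin n) ℝ} (hW : Wᵀ * W = 1)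
    (hd : W.det = -1) : ∃ v : Fin n → ℝ, v ⬝ᵥ v = 1 ∧ W *ᵥ v = -v := by
  have hdet : (W + 1).det = 0 := by
    have hWWt : W * Wᵀ = 1 := mul_eq_one_comm.1 hW
    have h1 : (W + 1).det = W.det * (1 + Wᵀ).det := by
      rw [← det_mul]
      congr 1
      rw [mul_add, mul_one, hWWt, add_comm]
    have h2 : (1 + Wᵀ).det = (W + 1).det := by
      rw [show (1:Matrix (Fin n) (Fin n) ℝ) + Wᵀ = (W + 1)ᵀ by simp [transpose_add, add_comm]]
      exact det_transpose _
    rw [h2, hd] at h1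
    linarith
  obtain ⟨v, hv0, hv⟩ := (Matrix.exists_mulVec_eq_zero_iff).2 hdet
  have hWv : W *ᵥ v = -v := by
    have : W *ᵥ v + v = 0 := by
      have := hv; rwa [add_mulVec, one_mulVec] at this
    linear_combination (norm := module) this
  obtain ⟨w, hw1, hw2⟩ := s9_normalize (R := W) (μ := -1) hv0 (by rw [hWv]; module)
  exact ⟨w, hw1, by rw [hw2]; module⟩

variable {n : ℕ}

private lemma s9_mul_vecMulVec (A : Matrix (Fin n) (Fin n) ℝ) (u v : Fin n → ℝ) :
    A * vecMulVec u v = vecMulVec (A *ᵥ u) v := by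
  ext i j
  simp [mul_apply, vecMulVec_apply, mulVec, dotProduct, Finset.sum_mul, mul_assoc]

private lemma s9_vecMulVec_mul (A : Matrix (Fin n) (Fin n) ℝ) (u v : Fin n → ℝ) :
    vecMulVec u v * A = vecMulVec u (Aᵀ *ᵥ v) := by
  ext i j
  simp [mul_apply, vecMulVec_apply, mulVec, dotProduct, Finset.mul_sum, transpose_apply]
  congr 1; ext k; ring

private lemma s9_vecMulVec_mul_vecMulVec (u v w x : Fin n → ℝ) :
    vecMulVec u v * vecMulVec w x = (v ⬝ᵥ w) • vecMulVec u x := by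
  ext i j
  simp [mul_apply, vecMulVec_apply, dotProduct, Finset.sum_mul, Finset.mul_sum]
  congr 1; ext k; ring

private lemma s9_transpose_vecMulVec (u v : Fin n → ℝ) :
    (vecMulVec u v)ᵀ = vecMulVec v u := by
  ext i j; simp [vecMulVec_apply, mul_comm]

private lemma s9_trace_vecMulVec (u v : Fin n → ℝ) :
    (vecMulVec u v).trace = u ⬝ᵥ v := by
  simp [trace, Matrix.diag, vecMulVec_apply, dotProduct]

private lemma s9_refl_transpose (v : Fin n → ℝ) :
    (1 - (2:ℝ) • vecMulVec v v)ᵀ = 1 - (2:ℝ) • vecMulVec v v := by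
  rw [transpose_sub, transpose_smul, s9_transpose_vecMulVec, transpose_one]

private lemma s9_refl_mul_self {v : Fin n → ℝ} (hv : v ⬝ᵥ v = 1) :
    (1 - (2:ℝ) • vecMulVec v v) * (1 - (2:ℝ) • vecMulVec v v) = 1 := by
  have h := s9_vecMulVec_mul_vecMulVec v v v v
  rw [hv, one_smul] at h
  simp only [Matrix.sub_mul, Matrix.mul_sub, Matrix.one_mul, Matrix.mul_one,
    Matrix.mul_smul, Matrix.smul_mul, h, smul_smul]
  module

private lemma s9_refl_orth {v : Fin n → ℝ} (hv : v ⬝ᵥ v = 1) :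
    (1 - (2:ℝ) • vecMulVec v v)ᵀ * (1 - (2:ℝ) • vecMulVec v v) = 1 := by
  rw [s9_refl_transpose]; exact s9_refl_mul_self hv

private lemma s9_refl_det {v : Fin n → ℝ} (hv : v ⬝ᵥ v = 1) :
    (1 - (2:ℝ) • vecMulVec v v).det = -1 := by
  have h : (1 : Matrix (Fin n) (Fin n) ℝ) - (2:ℝ) • vecMulVec v v
      = 1 + replicateCol (Fin 1) ((-2:ℝ) • v) * replicateRow (Fin 1) v := by
    rw [vecMulVec_eq (Fin 1)]
    rw [show Matrix.replicateCol (Fin 1) ((-2:ℝ) • v) = (-2:ℝ) • Matrix.replicateCol (Fin 1) v by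
      ext i j; simp]
    rw [Matrix.smul_mul]
    rw [sub_eq_add_neg]
    congr 1
    rw [← neg_smul]
    rfl
  rw [h]
  erw [det_one_add_replicateCol_mul_replicateRow (ι := Fin 1)]
  rw [dotProduct_smul, hv]
  norm_num

private lemma s9_trace_le_sub_two {W : Matrix (Fin n) (Fin n) ℝ} (hW : Wᵀ * W = 1)
    (hd : W.det = -1) : W.trace ≤ (n:ℝ) - 2 := by
  obtain ⟨v, hv1, hv2⟩ := s9_neg_one_eigvec hW hd
  set N := W + (2:ℝ) • vecMulVec v v with hN
  have hWt : Wᵀ *ᵥ v = -v := by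
    have h1 : Wᵀ *ᵥ (W *ᵥ v) = v := by
      rw [mulVec_mulVec, hW, one_mulVec]
    rw [hv2, mulVec_neg] at h1
    linear_combination (norm := module) - h1
  have hNorth : Nᵀ * N = 1 := by
    rw [hN, transpose_add, transpose_smul, s9_transpose_vecMulVec, Matrix.add_mul,
      Matrix.mul_add, Matrix.mul_add, hW, Matrix.smul_mul, Matrix.smul_mul, Matrix.mul_smul,
      Matrix.mul_smul, s9_vecMulVec_mul_vecMulVec, hv1, one_smul,
      s9_mul_vecMulVec, s9_vecMulVec_mul, hWt]
    have h2 : vecMulVec (-v) v = -vecMulVec v v := by ext i j; simp [vecMulVec_apply]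
    have h3 : vecMulVec v (-v) = -vecMulVec v v := by ext i j; simp [vecMulVec_apply]
    rw [h2, h3, smul_smul]
    module
  have := s9_trace_le hNorth
  rw [hN, trace_add, trace_smul, s9_trace_vecMulVec, hv1] at this
  simp at this
  linarith

private lemma s9_refl_of_trace {W : Matrix (Fin n) (Fin n) ℝ} (hW : Wᵀ * W = 1)
    (hd : W.det = -1) (ht : W.trace = (n:ℝ) - 2) :
    ∃ v : Fin n → ℝ, v ⬝ᵥ v = 1 ∧ W = 1 - (2:ℝ) • vecMulVec v v := by
  obtain ⟨v, hv1, hv2⟩ := s9_neg_one_eigvec hW hd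
  set N := W + (2:ℝ) • vecMulVec v v with hN
  have hWt : Wᵀ *ᵥ v = -v := by
    have h1 : Wᵀ *ᵥ (W *ᵥ v) = v := by
      rw [mulVec_mulVec, hW, one_mulVec]
    rw [hv2, mulVec_neg] at h1
    linear_combination (norm := module) - h1
  have hNorth : Nᵀ * N = 1 := by
    rw [hN, transpose_add, transpose_smul, s9_transpose_vecMulVec, Matrix.add_mul,
      Matrix.mul_add, Matrix.mul_add, hW, Matrix.smul_mul, Matrix.smul_mul, Matrix.mul_smul,
      Matrix.mul_smul, s9_vecMulVec_mul_vecMulVec, hv1, one_smul,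
      s9_mul_vecMulVec, s9_vecMulVec_mul, hWt]
    have h2 : vecMulVec (-v) v = -vecMulVec v v := by ext i j; simp [vecMulVec_apply]
    have h3 : vecMulVec v (-v) = -vecMulVec v v := by ext i j; simp [vecMulVec_apply]
    rw [h2, h3, smul_smul]
    module
  have htN : N.trace = n := by
    rw [hN, trace_add, trace_smul, s9_trace_vecMulVec, hv1, ht]
    simp
  have := s9_eq_one_of_trace hNorth htN
  refine ⟨v, hv1, ?_⟩
  rw [hN] at this
  linear_combination (norm := module) this
variable {n : ℕ}

private lemma s9_inner_eq_dot (x y : EuclideanSpace ℝ (Fin n)) :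
    ⟪x, y⟫ = (WithLp.equiv 2 (Fin n → ℝ) x) ⬝ᵥ (WithLp.equiv 2 (Fin n → ℝ) y) := by
  rw [EuclideanSpace.inner_eq_star_dotProduct]
  rw [star_trivial, dotProduct_comm]; rfl

private lemma s9_extend {c : Fin n → Fin n → ℝ} {s : Set (Fin n)}
    (h : ∀ i ∈ s, ∀ j ∈ s, c i ⬝ᵥ c j = if i = j then 1 else 0) :
    ∃ P : Matrix (Fin n) (Fin n) ℝ, Pᵀ * P = 1 ∧ ∀ i ∈ s, ∀ k, P k i = c i k := by
  set v : Fin n → EuclideanSpace ℝ (Fin n) :=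
    fun i => (WithLp.equiv 2 (Fin n → ℝ)).symm (c i) with hv
  have hvo : Orthonormal ℝ (s.restrict v) := by
    rw [orthonormal_iff_ite]
    rintro ⟨i, hi⟩ ⟨j, hj⟩
    rw [show s.restrict v ⟨i, hi⟩ = v i from rfl, show s.restrict v ⟨j, hj⟩ = v j from rfl, s9_inner_eq_dot]
    simp only [hv, Equiv.apply_symm_apply]
    rw [h i hi j hj]
    by_cases hij : i = j
    · subst hij; simp
    · rw [if_neg hij, if_neg (by simpa [Subtype.ext_iff] using hij)]
  obtain ⟨b, hb⟩ := hvo.exists_orthonormalBasis_extension_of_card_eq (by simp)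
  refine ⟨Matrix.of fun k i => b i k, ?_, ?_⟩
  · ext i j
    have := (orthonormal_iff_ite.1 b.orthonormal) i j
    rw [s9_inner_eq_dot] at this
    simp only [mul_apply, transpose_apply, Matrix.of_apply, one_apply]
    simpa [dotProduct] using this
  · intro i hi k
    have := hb i hi
    simp only [Matrix.of_apply]
    rw [this]
    simp [hv]
private lemma s9_eigenbasis {m : ℕ} {R : Matrix (Fin (m+1)) (Fin (m+1)) ℝ}
    (hsym : Rᵀ = R) {v : Fin (m+1) → ℝ} {lam : ℝ} (hv1 : v ⬝ᵥ v = 1)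
    (hv2 : R *ᵥ v = lam • v) :
    ∃ H : Matrix (Fin (m+1)) (Fin (m+1)) ℝ, Hᵀ * H = 1 ∧ (Hᵀ * R * H).IsDiag ∧
      (∀ k, H k 0 = v k) := by
  have hherm : R.IsHermitian := by
    rwa [Matrix.IsHermitian, conjTranspose_eq_transpose_of_trivial]
  have hT : (Matrix.toEuclideanLin R).IsSymmetric := Matrix.isHermitian_iff_isSymmetric.1 hherm
  set T := Matrix.toEuclideanLin R with hTdef
  set E := EuclideanSpace ℝ (Fin (m+1))
  set v' : E := (WithLp.equiv 2 (Fin (m+1) → ℝ)).symm v with hv'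
  have hTv' : T v' = lam • v' := by
    rw [hTdef]; show WithLp.toLp 2 (R *ᵥ v) = _; rw [hv2]; rfl
  have hv'norm : ⟪v', v'⟫ = 1 := by rw [s9_inner_eq_dot]; simpa [hv'] using hv1
  have hv'ne : v' ≠ 0 := by
    intro h0
    rw [h0, inner_zero_left] at hv'norm
    norm_num at hv'norm
  set V := (ℝ ∙ v')ᗮ with hV
  have hVinv : ∀ x ∈ V, T x ∈ V := by
    intro x hx
    rw [hV, Submodule.mem_orthogonal] at hx ⊢
    intro u hu
    obtain ⟨a, rfl⟩ := Submodule.mem_span_singleton.1 hu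
    have h0 : ⟪v', x⟫ = (0:ℝ) := hx v' (Submodule.mem_span_singleton_self v')
    have h1 : ⟪v', T x⟫ = lam * ⟪v', x⟫ := by
      rw [← hT v' x, hTv', real_inner_smul_left]
    rw [inner_smul_left, h1, h0]
    simp
  have hT' : (T.restrict hVinv).IsSymmetric := hT.restrict_invariant hVinv
  haveI : Fact (Module.finrank ℝ E = m + 1) := ⟨by simp [E]⟩
  have hdim : Module.finrank ℝ V = m := Submodule.finrank_orthogonal_span_singleton hv'ne
  set b := hT'.eigenvectorBasis hdim with hb
  set mu : Fin (m+1) → ℝ := Fin.cons lam (hT'.eigenvalues hdim) with hmu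
  set c : Fin (m+1) → E := Fin.cons v' (fun i => (b i : E)) with hc
  have hbV : ∀ i, (b i : E) ∈ V := fun i => (b i).2
  have hinner : ∀ i j, ⟪c i, c j⟫ = if i = j then 1 else 0 := by
    intro i j
    induction i using Fin.cases with
    | zero =>
      induction j using Fin.cases with
      | zero => simpa [hc] using hv'norm
      | succ j =>
        have h0 : ⟪v', ((b j : E))⟫ = (0:ℝ) :=
          (Submodule.mem_orthogonal _ _).mp (hbV j) v' (Submodule.mem_span_singleton_self v')
        simp [hc, h0, (Fin.succ_ne_zero j).symm]
    | succ i =>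
      induction j using Fin.cases with
      | zero =>
        have h0 : ⟪((b i : E)), v'⟫ = (0:ℝ) := by
          rw [real_inner_comm]
          exact (Submodule.mem_orthogonal _ _).mp (hbV i) v' (Submodule.mem_span_singleton_self v')
        simp [hc, h0, Fin.succ_ne_zero i]
      | succ j =>
        rw [hc]
        simp only [Fin.cons_succ]
        have := (orthonormal_iff_ite.1 b.orthonormal) i j
        rw [Submodule.coe_inner] at this
        rw [this]
        by_cases hij : i = j
        · subst hij; simp
        · rw [if_neg hij, if_neg (by simpa [Fin.succ_inj] using hij)]
  have heig : ∀ j, T (c j) = mu j • c j := by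
    intro j
    induction j using Fin.cases with
    | zero => simpa [hc, hmu] using hTv'
    | succ j =>
      have h1 := hT'.apply_eigenvectorBasis hdim j
      have h2 : T ((b j : E)) = ((T.restrict hVinv (b j) : V) : E) := rfl
      rw [hc, hmu]
      simp only [Fin.cons_succ]
      rw [h2, h1]
      push_cast
      simp
      rfl
  -- translate to plain vectors
  set cv : Fin (m+1) → Fin (m+1) → ℝ := fun j => WithLp.equiv 2 (Fin (m+1) → ℝ) (c j) with hcv
  have hdot : ∀ i j, cv i ⬝ᵥ cv j = if i = j then 1 else 0 := by
    intro i j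
    rw [← s9_inner_eq_dot, hinner]
  have hmulvec : ∀ j, R *ᵥ cv j = mu j • cv j := by
    intro j
    have := congrArg (WithLp.equiv 2 (Fin (m+1) → ℝ)) (heig j)
    change R *ᵥ cv j = mu j • cv j at this
    simpa [hcv] using this
  refine ⟨Matrix.of fun k j => cv j k, ?_, ?_, ?_⟩
  · ext i j
    have := hdot i j
    simp only [mul_apply, transpose_apply, Matrix.of_apply, one_apply]
    simpa [dotProduct] using this
  · intro i j hij
    have hentry : ((Matrix.of fun k j => cv j k)ᵀ * R * Matrix.of fun k j => cv j k) i j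
        = cv i ⬝ᵥ (R *ᵥ cv j) := by
      simp only [mul_apply, transpose_apply, Matrix.of_apply, dotProduct, mulVec, dotProduct,
        Finset.mul_sum, Finset.sum_mul]
      rw [Finset.sum_comm]
      apply Finset.sum_congr rfl; intro l _
      apply Finset.sum_congr rfl; intro k _
      ring
    rw [hentry, hmulvec j, dotProduct_smul, hdot i j, if_neg hij]
    simp
  · intro k
    simp only [Matrix.of_apply]
    simp [hcv, hc, hv']

private lemma s9_spectral {R : Matrix (Fin n) (Fin n) ℝ} (hR : R.PosSemidef) :
    ∃ (H0 : Matrix (Fin n) (Fin n) ℝ) (d : Fin n → ℝ),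
      H0ᵀ * H0 = 1 ∧ R = H0 * diagonal d * H0ᵀ ∧ (∀ i, 0 ≤ d i) ∧
      (∀ i, R *ᵥ (fun k => H0 k i) = d i • (fun k => H0 k i)) := by
  have hherm := hR.1
  set H0 : Matrix (Fin n) (Fin n) ℝ := (hherm.eigenvectorUnitary : Matrix (Fin n) (Fin n) ℝ)
    with hH0def
  refine ⟨H0, hherm.eigenvalues, ?_, ?_, hR.eigenvalues_nonneg, ?_⟩
  · have hmem := (hherm.eigenvectorUnitary).2
    rw [Unitary.mem_iff] at hmem
    have := hmem.1
    rwa [Matrix.star_eq_conjTranspose, conjTranspose_eq_transpose_of_trivial] at this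
  · have := hherm.spectral_theorem
    rwa [Unitary.conjStarAlgAut_apply, Matrix.star_eq_conjTranspose, conjTranspose_eq_transpose_of_trivial,
      show (RCLike.ofReal ∘ hherm.eigenvalues : Fin n → ℝ) = hherm.eigenvalues by
        funext i; simp] at this
  · intro i
    have h1 := hherm.mulVec_eigenvectorBasis i
    have h2 : (fun k => H0 k i) = ⇑(hherm.eigenvectorBasis i) := by
      funext k; rw [hH0def]; exact hherm.eigenvectorUnitary_apply k i
    rw [h2]
    exact h1
private lemma s9_ker {B R : Matrix (Fin n) (Fin n) ℝ} (hRR : R * R = Bᵀ * B)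
    {x : Fin n → ℝ} (hx : R *ᵥ x = 0) : B *ᵥ x = 0 := by
  have h1 : x ⬝ᵥ ((Bᵀ * B) *ᵥ x) = (B *ᵥ x) ⬝ᵥ (B *ᵥ x) := by
    rw [← mulVec_mulVec, dotProduct_mulVec, vecMul_transpose]
  rw [← hRR, ← mulVec_mulVec, hx, mulVec_zero, dotProduct_zero] at h1
  exact dotProduct_self_eq_zero.1 h1.symm

private lemma s9_polar {B R : Matrix (Fin n) (Fin n) ℝ}
    (hdet : B.det ≤ 0) (hR : R.PosSemidef) (hRR : R * R = Bᵀ * B) :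
    ∃ U : Matrix (Fin n) (Fin n) ℝ, Uᵀ * U = 1 ∧ U.det = -1 ∧ U * R = B := by
  obtain ⟨H0, d, hH0, hspec, hd0, heig⟩ := s9_spectral hR
  have hsym : Rᵀ = R := by
    have := hR.1
    rwa [Matrix.IsHermitian, conjTranspose_eq_transpose_of_trivial] at this
  have hH0' : H0 * H0ᵀ = 1 := mul_eq_one_comm.1 hH0
  have hcol := s9_col_dot hH0
  have hBB : ∀ i j, (B *ᵥ (fun k => H0 k i)) ⬝ᵥ (B *ᵥ (fun k => H0 k j))
      = d j ^ 2 * (if i = j then 1 else 0) := by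
    intro i j
    have h1 : (fun k => H0 k i) ⬝ᵥ ((Bᵀ * B) *ᵥ (fun k => H0 k j))
        = (B *ᵥ (fun k => H0 k i)) ⬝ᵥ (B *ᵥ (fun k => H0 k j)) := by
      rw [← mulVec_mulVec, dotProduct_mulVec, vecMul_transpose]
    rw [← h1, ← hRR, ← mulVec_mulVec, heig j, mulVec_smul, heig j, dotProduct_smul,
      dotProduct_smul, hcol i j]
    simp [sq]
    try ring
  have horm : ∀ i ∈ {i | d i ≠ 0}, ∀ j ∈ {i | d i ≠ 0},
      ((d i)⁻¹ • (B *ᵥ (fun k => H0 k i))) ⬝ᵥ ((d j)⁻¹ • (B *ᵥ (fun k => H0 k j)))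
        = if i = j then 1 else 0 := by
    intro i hi j hj
    simp only [Set.mem_setOf_eq] at hi hj
    rw [smul_dotProduct, dotProduct_smul, hBB i j]
    by_cases hij : i = j
    · subst hij
      simp only [if_pos rfl, mul_one]
      rw [sq]
      simp only [ite_true, smul_eq_mul, mul_one]
      field_simp
    · simp [hij]
  obtain ⟨P, hP, hPc⟩ := s9_extend horm
  have hPD : P * diagonal d = B * H0 := by
    ext k j
    rw [mul_diagonal]
    have hBH : (B * H0) k j = (B *ᵥ (fun l => H0 l j)) k := by
      simp [mul_apply, mulVec, dotProduct]
    by_cases hj : d j = 0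
    · rw [hj, mul_zero, hBH]
      have : B *ᵥ (fun l => H0 l j) = 0 := by
        apply s9_ker hRR
        rw [heig j, hj, zero_smul]
      rw [this]; rfl
    · rw [hPc j hj k, hBH]
      simp only [Pi.smul_apply, smul_eq_mul]
      field_simp
  refine ?_
  set U1 := P * H0ᵀ with hU1def
  have hU1 : U1ᵀ * U1 = 1 := by
    rw [hU1def, transpose_mul, transpose_transpose]
    calc H0 * Pᵀ * (P * H0ᵀ) = H0 * (Pᵀ * P) * H0ᵀ := by simp only [Matrix.mul_assoc]
    _ = 1 := by rw [hP, Matrix.mul_one, hH0']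
  have hU1R : U1 * R = B := by
    rw [hU1def, hspec, Matrix.mul_assoc, ← Matrix.mul_assoc H0ᵀ, ← Matrix.mul_assoc H0ᵀ, hH0,
      Matrix.one_mul, ← Matrix.mul_assoc, hPD, Matrix.mul_assoc, hH0', Matrix.mul_one]
  have hU1detsq : U1.det * U1.det = 1 := by
    have := congrArg Matrix.det hU1
    rwa [det_mul, det_transpose, det_one] at this
  by_cases hU1det : U1.det = -1
  · exact ⟨U1, hU1, hU1det, hU1R⟩
  · have hU1det1 : U1.det = 1 := by
      rcases mul_self_eq_one_iff.1 hU1detsq with h | h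
      · exact h
      · exact absurd h hU1det
    have hdetB : B.det = R.det := by
      rw [← hU1R, det_mul, hU1det1, one_mul]
    have h2 : H0.det * H0.det = 1 := by
      have := congrArg Matrix.det hH0
      rwa [det_mul, det_transpose, det_one] at this
    have hdR : R.det = ∏ i, d i := by
      rw [hspec, det_mul, det_mul, det_transpose, det_diagonal]
      linear_combination (∏ i, d i) * h2
    have hRdet0 : R.det = 0 := by
      have h3 : 0 ≤ R.det := by
        rw [hdR]; exact Finset.prod_nonneg fun i _ => hd0 i
      linarith [hdet, hdetB ▸ hdet]
    obtain ⟨x, hx0, hx⟩ := Matrix.exists_mulVec_eq_zero_iff.2 hRdet0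
    obtain ⟨w, hw1, hw2⟩ := s9_normalize (μ := 0) hx0 (by rw [hx, zero_smul])
    rw [zero_smul] at hw2
    refine ⟨U1 * (1 - (2:ℝ) • vecMulVec w w), ?_, ?_, ?_⟩
    · rw [transpose_mul, Matrix.mul_assoc, ← Matrix.mul_assoc _ U1 _, hU1, Matrix.one_mul,
        s9_refl_orth hw1]
    · rw [det_mul, hU1det1, s9_refl_det hw1, one_mul]
    · rw [Matrix.mul_assoc, Matrix.sub_mul, Matrix.one_mul, Matrix.smul_mul,
        s9_vecMulVec_mul, hsym, hw2]
      have : vecMulVec w (0 : Fin n → ℝ) = 0 := by ext i j; simp [vecMulVec_apply]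
      rw [this, smul_zero, sub_zero, hU1R]

private lemma s9_trace_mul_diagonal (M : Matrix (Fin n) (Fin n) ℝ) (d : Fin n → ℝ) :
    (M * diagonal d).trace = ∑ i, M i i * d i := by
  simp [Matrix.trace, Matrix.diag, mul_diagonal]

private lemma s9_trace_conj {H0 : Matrix (Fin n) (Fin n) ℝ} (hH0 : H0ᵀ * H0 = 1)
    (A : Matrix (Fin n) (Fin n) ℝ) : (H0 * A * H0ᵀ).trace = A.trace := by
  rw [trace_mul_cycle, hH0, Matrix.one_mul]

private lemma s9_orth_mul {A B : Matrix (Fin n) (Fin n) ℝ} (hA : Aᵀ * A = 1)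
    (hB : Bᵀ * B = 1) : (A * B)ᵀ * (A * B) = 1 := by
  rw [transpose_mul, Matrix.mul_assoc, ← Matrix.mul_assoc Aᵀ, hA, Matrix.one_mul, hB]

private lemma s9_orth_transpose {A : Matrix (Fin n) (Fin n) ℝ} (hA : Aᵀ * A = 1) :
    Aᵀᵀ * Aᵀ = 1 := by
  rw [transpose_transpose]; exact mul_eq_one_comm.1 hA

private lemma s9_dot_mulVec (A : Matrix (Fin n) (Fin n) ℝ) (x y : Fin n → ℝ) :
    x ⬝ᵥ (Aᵀ *ᵥ y) = (A *ᵥ x) ⬝ᵥ y := by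
  rw [dotProduct_mulVec, vecMul_transpose]

private lemma s9_sum_bound {M : Matrix (Fin n) (Fin n) ℝ} (hM : Mᵀ * M = 1)
    (hMdet : M.det = -1) {d : Fin n → ℝ} {lam : ℝ} (hlam : 0 ≤ lam)
    (hd : ∀ i, lam ≤ d i) : ∑ i, M i i * d i ≤ (∑ i, d i) - 2 * lam := by
  have htr : M.trace ≤ (n:ℝ) - 2 := s9_trace_le_sub_two hM hMdet
  have htr' : ∑ i, M i i ≤ (n:ℝ) - 2 := htr
  have h1 : ∀ i, lam * (1 - M i i) ≤ d i * (1 - M i i) := fun i =>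
    mul_le_mul_of_nonneg_right (hd i) (by linarith [s9_diag_le_one hM i])
  have h2 : ∑ i, lam * (1 - M i i) = lam * ((n:ℝ) - ∑ i, M i i) := by
    have hrhs : lam * ((n:ℝ) - ∑ i, M i i) = ∑ i : Fin n, (lam - lam * M i i) := by
      rw [Finset.sum_sub_distrib, Finset.sum_const, Finset.card_univ, Fintype.card_fin,
        mul_sub, Finset.mul_sum, nsmul_eq_mul]
      ring
    rw [hrhs]
    exact Finset.sum_congr rfl fun i _ => by ring
  have h3 : 2 * lam ≤ ∑ i, d i * (1 - M i i) := by
    calc 2 * lam ≤ lam * ((n:ℝ) - ∑ i, M i i) := by nlinarith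
    _ = ∑ i, lam * (1 - M i i) := h2.symm
    _ ≤ ∑ i, d i * (1 - M i i) := Finset.sum_le_sum (fun i _ => h1 i)
  have h4 : ∑ i, d i * (1 - M i i) = (∑ i, d i) - ∑ i, M i i * d i := by
    rw [← Finset.sum_sub_distrib]
    congr 1; ext i; ring
  linarith

private lemma s9_sum_eq {M : Matrix (Fin n) (Fin n) ℝ} (hM : Mᵀ * M = 1)
    (hMdet : M.det = -1) {d : Fin n → ℝ} {lam : ℝ} (hlam : 0 ≤ lam)
    (hd : ∀ i, lam ≤ d i) (heq : ∑ i, M i i * d i = (∑ i, d i) - 2 * lam) :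
    (∀ i, (d i - lam) * (1 - M i i) = 0) ∧ (lam ≠ 0 → M.trace = (n:ℝ) - 2) := by
  have htr : M.trace ≤ (n:ℝ) - 2 := s9_trace_le_sub_two hM hMdet
  have htr' : ∑ i, M i i ≤ (n:ℝ) - 2 := htr
  have hS1 : ∑ i, d i * (1 - M i i) = 2 * lam := by
    have h4 : ∑ i, d i * (1 - M i i) = (∑ i, d i) - ∑ i, M i i * d i := by
      rw [← Finset.sum_sub_distrib]
      congr 1; ext i; ring
    rw [h4, heq]; ring
  have h2 : ∑ i, lam * (1 - M i i) = lam * ((n:ℝ) - ∑ i, M i i) := by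
    have hrhs : lam * ((n:ℝ) - ∑ i, M i i) = ∑ i : Fin n, (lam - lam * M i i) := by
      rw [Finset.sum_sub_distrib, Finset.sum_const, Finset.card_univ, Fintype.card_fin,
        mul_sub, Finset.mul_sum, nsmul_eq_mul]
      ring
    rw [hrhs]
    exact Finset.sum_congr rfl fun i _ => by ring
  have hsplit : ∑ i, (d i - lam) * (1 - M i i)
      = (∑ i, d i * (1 - M i i)) - ∑ i, lam * (1 - M i i) := by
    rw [← Finset.sum_sub_distrib]
    congr 1; ext i; ring
  have hnn : ∀ i ∈ Finset.univ, 0 ≤ (d i - lam) * (1 - M i i) := fun i _ =>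
    mul_nonneg (by linarith [hd i]) (by linarith [s9_diag_le_one hM i])
  have hle : ∑ i, (d i - lam) * (1 - M i i) ≤ 0 := by
    rw [hsplit, hS1, h2]
    nlinarith
  have hzero : ∑ i, (d i - lam) * (1 - M i i) = 0 :=
    le_antisymm hle (Finset.sum_nonneg hnn)
  constructor
  · exact fun i => (Finset.sum_eq_zero_iff_of_nonneg hnn).1 hzero i (Finset.mem_univ i)
  · intro hlz
    have hsum0 := hzero
    rw [hsplit, hS1, h2] at hsum0
    have h6 : lam * ((n:ℝ) - ∑ i, M i i) = lam * 2 := by linarith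
    have h5 := mul_left_cancel₀ hlz h6
    have htreq : M.trace = ∑ i, M i i := rfl
    rw [htreq]; linarith

private lemma s9_val_refl {U R B : Matrix (Fin n) (Fin n) ℝ} (hU : Uᵀ * U = 1)
    (hUR : U * R = B) (hsym : Rᵀ = R) {v : Fin n → ℝ} {lam : ℝ}
    (hv1 : v ⬝ᵥ v = 1) (hv2 : R *ᵥ v = lam • v) :
    ((U * (1 - (2:ℝ) • vecMulVec v v))ᵀ * B).trace = R.trace - 2 * lam := by
  have h1 : (U * (1 - (2:ℝ) • vecMulVec v v))ᵀ * B
      = (1 - (2:ℝ) • vecMulVec v v) * R := by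
    rw [transpose_mul, s9_refl_transpose, Matrix.mul_assoc, ← hUR, ← Matrix.mul_assoc Uᵀ,
      hU, Matrix.one_mul]
  rw [h1, Matrix.sub_mul, Matrix.one_mul, Matrix.smul_mul, s9_vecMulVec_mul, hsym, hv2,
    trace_sub, trace_smul, s9_trace_vecMulVec, dotProduct_smul, hv1]
  simp

private lemma s9_HJH {m : ℕ} {H : Matrix (Fin (m+1)) (Fin (m+1)) ℝ} (hH : Hᵀ * H = 1) :
    H * diagonal (fun i : Fin (m+1) => if i = 0 then (-1:ℝ) else 1) * Hᵀ
      = 1 - (2:ℝ) • vecMulVec (fun k => H k 0) (fun k => H k 0) := by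
  have hH' := mul_eq_one_comm.1 hH
  have hJ : diagonal (fun i : Fin (m+1) => if i = 0 then (-1:ℝ) else 1)
      = 1 - (2:ℝ) • vecMulVec (Pi.single (0:Fin (m+1)) (1:ℝ)) (Pi.single 0 1) := by
    ext i j
    rcases eq_or_ne i j with rfl | hij
    · by_cases hi : i = 0 <;>
        simp [diagonal_apply_eq, vecMulVec_apply, Pi.single_apply, hi] <;> norm_num
    · have hne : i ≠ 0 ∨ j ≠ 0 := by
        by_contra hcon
        push_neg at hcon
        exact hij (hcon.1.trans hcon.2.symm)
      have hz : vecMulVec (Pi.single (0:Fin (m+1)) (1:ℝ)) (Pi.single 0 1) i j = 0 := by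
        rw [vecMulVec_apply]
        rcases hne with h | h
        · rw [Pi.single_eq_of_ne h, zero_mul]
        · rw [Pi.single_eq_of_ne h, mul_zero]
      simp [diagonal_apply_ne _ hij, hz, one_apply_ne hij]
  have he : H *ᵥ Pi.single (0:Fin (m+1)) (1:ℝ) = fun k => H k 0 := by
    funext k; simp [mulVec_single]
  rw [hJ, Matrix.mul_sub, Matrix.mul_one, Matrix.mul_smul, Matrix.sub_mul, Matrix.smul_mul,
    hH', s9_mul_vecMulVec, s9_vecMulVec_mul, transpose_transpose, he]

theorem stmt9 {n : ℕ} (hn : 0 < n)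
    (B R : Matrix (Fin n) (Fin n) ℝ) (hdet : B.det ≤ 0)
    (hR : R.PosSemidef) (hRR : R * R = Bᵀ * B) (lammin : ℝ)
    (hmin : IsLeast {μ : ℝ | ∃ v : Fin n → ℝ, v ≠ 0 ∧ R.mulVec v = μ • v} lammin) :
    IsGreatest
      {x : ℝ | ∃ Q : Matrix (Fin n) (Fin n) ℝ,
        Qᵀ * Q = 1 ∧ Q.det = 1 ∧ x = (Qᵀ * B).trace}
      (R.trace - 2 * lammin)
    ∧ ∀ Q : Matrix (Fin n) (Fin n) ℝ, Qᵀ * Q = 1 → Q.det = 1 →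
        ((Qᵀ * B).trace = R.trace - 2 * lammin ↔
          ∃ U H : Matrix (Fin n) (Fin n) ℝ,
            Uᵀ * U = 1 ∧ U.det = -1 ∧ U * R = B ∧
            Hᵀ * H = 1 ∧ (Hᵀ * R * H).IsDiag ∧
            R.mulVec (fun i => H i ⟨0, hn⟩) = lammin • (fun i => H i ⟨0, hn⟩) ∧
            Q = U * H *
                Matrix.diagonal (fun i : Fin n => if i = (⟨0, hn⟩ : Fin n) then (-1 : ℝ) else 1)
                * Hᵀ) := by
  obtain ⟨m, rfl⟩ : ∃ m, n = m + 1 := ⟨n - 1, (Nat.succ_pred_eq_of_pos hn).symm⟩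
  have hzero : (⟨0, hn⟩ : Fin (m+1)) = 0 := by ext; simp
  simp only [hzero]
  have hsym : Rᵀ = R := by
    have := hR.1
    rwa [Matrix.IsHermitian, conjTranspose_eq_transpose_of_trivial] at this
  obtain ⟨lv, hlv0, hlveq⟩ := hmin.1
  obtain ⟨v₀, hv₀1, hv₀2⟩ := s9_normalize hlv0 hlveq
  have hlam0 : 0 ≤ lammin := by
    have h := hR.dotProduct_mulVec_nonneg v₀
    rw [hv₀2] at h
    simpa [dotProduct_smul, hv₀1] using h
  obtain ⟨U₀, hU₀o, hU₀d, hU₀R⟩ := s9_polar hdet hR hRR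
  obtain ⟨H0, d, hH0, hspec, hd0, heig⟩ := s9_spectral hR
  have hH0' : H0 * H0ᵀ = 1 := mul_eq_one_comm.1 hH0
  have hdlam : ∀ i, lammin ≤ d i := by
    intro i
    apply hmin.2
    refine ⟨fun k => H0 k i, ?_, heig i⟩
    intro hcv
    have h := s9_col_dot hH0 i i
    rw [hcv] at h
    simp at h
  have htraceR : R.trace = ∑ i, d i := by
    rw [hspec, s9_trace_conj hH0, trace_diagonal]
  have hH0d2 : H0.det * H0.det = 1 := by
    have := congrArg Matrix.det hH0
    rwa [det_mul, det_transpose, det_one] at this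
  have hconj : ∀ Q : Matrix (Fin (m+1)) (Fin (m+1)) ℝ,
      Qᵀ * B = H0 * ((H0ᵀ * Qᵀ * U₀ * H0) * diagonal d) * H0ᵀ := by
    intro Q
    have h1 : H0 * ((H0ᵀ * Qᵀ * U₀ * H0) * diagonal d) * H0ᵀ
        = (H0 * H0ᵀ) * (Qᵀ * (U₀ * (H0 * (diagonal d * H0ᵀ)))) := by
      simp only [Matrix.mul_assoc]
    rw [h1, hH0', Matrix.one_mul, ← hU₀R, hspec]
    simp only [Matrix.mul_assoc]
  have hMorth : ∀ Q : Matrix (Fin (m+1)) (Fin (m+1)) ℝ, Qᵀ * Q = 1 →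
      (H0ᵀ * Qᵀ * U₀ * H0)ᵀ * (H0ᵀ * Qᵀ * U₀ * H0) = 1 := fun Q hQ =>
    s9_orth_mul (s9_orth_mul (s9_orth_mul (s9_orth_transpose hH0) (s9_orth_transpose hQ)) hU₀o) hH0
  have hMdet : ∀ Q : Matrix (Fin (m+1)) (Fin (m+1)) ℝ, Q.det = 1 →
      (H0ᵀ * Qᵀ * U₀ * H0).det = -1 := by
    intro Q hQd
    rw [det_mul, det_mul, det_mul, det_transpose, det_transpose, hQd, hU₀d]
    linear_combination (-1 : ℝ) * hH0d2
  have hval : ∀ Q : Matrix (Fin (m+1)) (Fin (m+1)) ℝ,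
      (Qᵀ * B).trace = ∑ i, (H0ᵀ * Qᵀ * U₀ * H0) i i * d i := by
    intro Q
    rw [hconj Q, s9_trace_conj hH0, s9_trace_mul_diagonal]
  have hub : ∀ Q : Matrix (Fin (m+1)) (Fin (m+1)) ℝ, Qᵀ * Q = 1 → Q.det = 1 →
      (Qᵀ * B).trace ≤ R.trace - 2 * lammin := by
    intro Q hQ hQd
    rw [hval Q, htraceR]
    exact s9_sum_bound (hMorth Q hQ) (hMdet Q hQd) hlam0 hdlam
  constructor
  · constructor
    · refine ⟨U₀ * (1 - (2:ℝ) • vecMulVec v₀ v₀), s9_orth_mul hU₀o (s9_refl_orth hv₀1), ?_, ?_⟩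
      · rw [det_mul, hU₀d, s9_refl_det hv₀1]; norm_num
      · exact (s9_val_refl hU₀o hU₀R hsym hv₀1 hv₀2).symm
    · rintro x ⟨Q, hQ1, hQ2, rfl⟩
      exact hub Q hQ1 hQ2
  intro Q hQ hQd
  constructor
  · intro heqv
    have heqs : ∑ i, (H0ᵀ * Qᵀ * U₀ * H0) i i * d i = (∑ i, d i) - 2 * lammin := by
      rw [← hval Q, heqv, htraceR]
    obtain ⟨hterm, htr2⟩ := s9_sum_eq (hMorth Q hQ) (hMdet Q hQd) hlam0 hdlam heqs
    by_cases hlz : lammin = 0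
    · subst hlz
      have hMD : (H0ᵀ * Qᵀ * U₀ * H0) * diagonal d = diagonal d := by
        ext i j
        rw [mul_diagonal]
        rcases eq_or_ne (d j) 0 with hdj | hdj
        · rcases eq_or_ne i j with rfl | hij
          · rw [diagonal_apply_eq, hdj, mul_zero]
          · rw [hdj, mul_zero, diagonal_apply_ne _ hij]
        · have hz := hterm j
          have hMjj : (H0ᵀ * Qᵀ * U₀ * H0) j j = 1 := by
            have h3 : d j * (1 - (H0ᵀ * Qᵀ * U₀ * H0) j j) = 0 := by linear_combination hz
            rcases mul_eq_zero.1 h3 with h | h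
            · exact absurd h hdj
            · linarith
          rcases eq_or_ne i j with rfl | hij
          · rw [diagonal_apply_eq, hMjj, one_mul]
          · rw [s9_col_eq_zero (hMorth Q hQ) hMjj hij, zero_mul, diagonal_apply_ne _ hij]
      have hQR : Qᵀ * B = R := by
        rw [hconj Q, hMD, ← hspec]
      have hB : B = Q * R := by
        rw [← hQR, ← Matrix.mul_assoc, mul_eq_one_comm.1 hQ, Matrix.one_mul]
      obtain ⟨H, hHo, hHdiag, hHcol⟩ := s9_eigenbasis hsym hv₀1 hv₀2
      refine ⟨Q * (1 - (2:ℝ) • vecMulVec v₀ v₀), H,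
        s9_orth_mul hQ (s9_refl_orth hv₀1), ?_, ?_, hHo, hHdiag, ?_, ?_⟩
      · rw [det_mul, hQd, s9_refl_det hv₀1]; norm_num
      · rw [Matrix.mul_assoc, Matrix.sub_mul, Matrix.one_mul, Matrix.smul_mul,
          s9_vecMulVec_mul, hsym, hv₀2, zero_smul]
        have hz0 : vecMulVec v₀ (0 : Fin (m+1) → ℝ) = 0 := by ext i j; simp [vecMulVec_apply]
        rw [hz0, smul_zero, sub_zero, ← hB]
      · have hcolv : (fun i => H i 0) = v₀ := funext hHcol
        rw [hcolv]; exact hv₀2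
      · have hJH := s9_HJH hHo
        have hcolv : (fun k => H k 0) = v₀ := funext hHcol
        rw [hcolv] at hJH
        simp only [Matrix.mul_assoc] at hJH ⊢
        rw [hJH, s9_refl_mul_self hv₀1, Matrix.mul_one]
    · have htrM := htr2 hlz
      obtain ⟨w, hw1, hwrefl⟩ := s9_refl_of_trace (hMorth Q hQ) (hMdet Q hQd) htrM
      have hMii : ∀ i, (H0ᵀ * Qᵀ * U₀ * H0) i i = 1 - 2 * (w i)^2 := by
        intro i
        rw [hwrefl]
        simp [vecMulVec_apply, sq]
      have hDw : ∀ i, d i * w i = lammin * w i := by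
        intro i
        rcases eq_or_ne (w i) 0 with h | h
        · rw [h, mul_zero, mul_zero]
        · have h1 := hterm i
          rw [hMii i] at h1
          have h2 : (d i - lammin) * (2 * w i ^ 2) = 0 := by linear_combination h1
          rcases mul_eq_zero.1 h2 with h3 | h3
          · have : d i = lammin := by linarith
            rw [this]
          · exact absurd (pow_eq_zero_iff two_ne_zero |>.1 (by linarith)) h
      have hv1 : (H0 *ᵥ w) ⬝ᵥ (H0 *ᵥ w) = 1 := by
        have h1 : w ⬝ᵥ (H0ᵀ *ᵥ (H0 *ᵥ w)) = (H0 *ᵥ w) ⬝ᵥ (H0 *ᵥ w) :=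
          s9_dot_mulVec H0 w (H0 *ᵥ w)
        rw [mulVec_mulVec, hH0, one_mulVec, hw1] at h1
        exact h1.symm
      have hRH : R * H0 = H0 * diagonal d := by
        rw [hspec, Matrix.mul_assoc, hH0, Matrix.mul_one]
      have hv2 : R *ᵥ (H0 *ᵥ w) = lammin • (H0 *ᵥ w) := by
        rw [mulVec_mulVec, hRH, ← mulVec_mulVec]
        have hDww : diagonal d *ᵥ w = lammin • w := by
          funext i
          rw [mulVec_diagonal]
          simpa using hDw i
        rw [hDww, mulVec_smul]
      have hQU : Qᵀ * U₀ = 1 - (2:ℝ) • vecMulVec (H0 *ᵥ w) (H0 *ᵥ w) := by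
        have h1 : H0 * (H0ᵀ * Qᵀ * U₀ * H0) * H0ᵀ = Qᵀ * U₀ := by
          simp only [Matrix.mul_assoc]
          rw [hH0', Matrix.mul_one, ← Matrix.mul_assoc, hH0', Matrix.one_mul]
        rw [← h1, hwrefl, Matrix.mul_sub, Matrix.mul_one, Matrix.mul_smul, Matrix.sub_mul,
          Matrix.smul_mul, hH0', s9_mul_vecMulVec, s9_vecMulVec_mul, transpose_transpose]
      have hQ2 : Q = U₀ * (1 - (2:ℝ) • vecMulVec (H0 *ᵥ w) (H0 *ᵥ w)) := by
        have h2 : Q * (Qᵀ * U₀) = U₀ := by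
          rw [← Matrix.mul_assoc, mul_eq_one_comm.1 hQ, Matrix.one_mul]
        rw [← h2, hQU, Matrix.mul_assoc, s9_refl_mul_self hv1, Matrix.mul_one]
      obtain ⟨H, hHo, hHdiag, hHcol⟩ := s9_eigenbasis hsym hv1 hv2
      refine ⟨U₀, H, hU₀o, hU₀d, hU₀R, hHo, hHdiag, ?_, ?_⟩
      · have hcolv : (fun i => H i 0) = H0 *ᵥ w := funext hHcol
        rw [hcolv]; exact hv2
      · have hJH := s9_HJH hHo
        have hcolv : (fun k => H k 0) = H0 *ᵥ w := funext hHcol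
        rw [hcolv] at hJH
        simp only [Matrix.mul_assoc] at hJH ⊢
        rw [hJH, ← hQ2]
  · rintro ⟨U, H, hUo, hUd, hUR, hHo, hHdiag, hHeig, rfl⟩
    have hcol1 : (fun k => H k 0) ⬝ᵥ (fun k => H k 0) = 1 := by
      have h := s9_col_dot hHo 0 0
      simpa using h
    have hJH := s9_HJH hHo
    have hform : U * H * diagonal (fun i : Fin (m+1) => if i = 0 then (-1:ℝ) else 1) * Hᵀ
        = U * (1 - (2:ℝ) • vecMulVec (fun k => H k 0) (fun k => H k 0)) := by
      rw [← hJH]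
      simp only [Matrix.mul_assoc]
    rw [hform]
    exact s9_val_refl hUo hUR hsym hcol1 hHeig
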